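/- arXiv:2307.00419 — 2 statements merged into one kernel-verified Lean document; each statement's English description precedes it below -/
import Mathlib

section
/- Let X₁, X₂ be real Banach spaces and let A₁ : X₁ → X₁, A₂ : X₂ → X₂, B₁ : X₂ → X₁, B₂ : X₁ → X₂ be bounded linear operators. Define E_j(σ) = exp(−σA_j), X_j(σ) = (∫₀^σ exp(−sA_j) ds) ∘ B_j, the symmetric approximation T̂(σ)(x,y) = (E₁(σ)x + X₁(σ)y, X₂(σ)x + E₂(σ)y), and 𝓒(x,y) = (A₁x − B₁y, A₂y − B₂x). Then for every (x,y) ∈ X₁ × X₂ and every σ ≥ 0, the curve σ ↦ T̂(σ)(x,y) is differentiable with derivative T̂′(σ)(x,y) = −T̂(σ)(𝓒(x,y)) + ( X₁(σ)(−B₂x + A₂y), X₂(σ)(A₁x − B₁y) ); equivalently, T̂′(σ) + T̂(σ) ∘ 𝓒 is the block operator with diagonal blocks −X₁(σ)∘B₂ and −X₂(σ)∘B₁ and off-diagonal blocks X₁(σ)∘A₂ and X₂(σ)∘A₁. -/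
noncomputable section

variable {X₁ X₂ : Type*} [NormedAddCommGroup X₁] [NormedSpace ℝ X₁] [CompleteSpace X₁]
  [NormedAddCommGroup X₂] [NormedSpace ℝ X₂] [CompleteSpace X₂]

/-- The operator exponential `exp (-σ A)` of a bounded operator `A`. -/
def expOp {X : Type*} [NormedAddCommGroup X] [NormedSpace ℝ X] [CompleteSpace X]
    (A : X →L[ℝ] X) (σ : ℝ) : X →L[ℝ] X :=
  NormedSpace.exp (-(σ • A))

/-- The coupling operator `X(σ) = (∫₀^σ exp(-s A) ds) ∘ B`. -/
def Xop {X Y : Type*} [NormedAddCommGroup X] [NormedSpace ℝ X] [CompleteSpace X]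
    [NormedAddCommGroup Y] [NormedSpace ℝ Y] (A : X →L[ℝ] X) (B : Y →L[ℝ] X) (σ : ℝ) :
    Y →L[ℝ] X :=
  (∫ s in (0:ℝ)..σ, expOp A s).comp B

set_option synthInstance.maxHeartbeats 800000

lemma expOp_hasDerivAt {X : Type*} [NormedAddCommGroup X] [NormedSpace ℝ X] [CompleteSpace X]
    (A : X →L[ℝ] X) (v : X) (σ : ℝ) :
    HasDerivAt (fun s : ℝ => expOp A s v) (-(expOp A σ (A v))) σ := by
  have h := (hasDerivAt_exp_smul_const (𝕂 := ℝ) (-A) σ).clm_apply (hasDerivAt_const σ v)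
  simpa [expOp, smul_neg, ContinuousLinearMap.mul_apply] using h

lemma expOp_continuous {X : Type*} [NormedAddCommGroup X] [NormedSpace ℝ X] [CompleteSpace X]
    (A : X →L[ℝ] X) : Continuous (fun s : ℝ => expOp A s) :=
  (continuous_iff_continuousAt.2 fun a => (NormedSpace.exp_analytic (𝕂 := ℝ) a).continuousAt).comp (by continuity)

lemma Xop_hasDerivAt {X Y : Type*} [NormedAddCommGroup X] [NormedSpace ℝ X] [CompleteSpace X]
    [NormedAddCommGroup Y] [NormedSpace ℝ Y] (A : X →L[ℝ] X) (B : Y →L[ℝ] X) (w : Y) (σ : ℝ) :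
    HasDerivAt (fun s : ℝ => Xop A B s w) (expOp A σ (B w)) σ := by
  have hc := expOp_continuous A
  have h : HasDerivAt (fun u : ℝ => ∫ s in (0:ℝ)..u, expOp A s) (expOp A σ) σ :=
    intervalIntegral.integral_hasDerivAt_right (hc.intervalIntegrable 0 σ)
      hc.stronglyMeasurable.stronglyMeasurableAtFilter hc.continuousAt
  simpa [Xop] using h.clm_apply (hasDerivAt_const σ (B w))

/-- The symmetric approximation `T̂(σ)(x,y) = (E₁(σ)x + X₁(σ)y, X₂(σ)x + E₂(σ)y)`. -/
def Tsymp (A₁ : X₁ →L[ℝ] X₁) (A₂ : X₂ →L[ℝ] X₂) (B₁ : X₂ →L[ℝ] X₁) (B₂ : X₁ →L[ℝ] X₂)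
    (σ : ℝ) : (X₁ × X₂) →L[ℝ] (X₁ × X₂) :=
  ((expOp A₁ σ).coprod (Xop A₁ B₁ σ)).prod ((Xop A₂ B₂ σ).coprod (expOp A₂ σ))

/-- The full operator `𝓒(x,y) = (A₁x - B₁y, A₂y - B₂x)`. -/
def opCp (A₁ : X₁ →L[ℝ] X₁) (A₂ : X₂ →L[ℝ] X₂) (B₁ : X₂ →L[ℝ] X₁) (B₂ : X₁ →L[ℝ] X₂) :
    (X₁ × X₂) →L[ℝ] (X₁ × X₂) :=
  (A₁.coprod (-B₁)).prod ((-B₂).coprod A₂)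

/-- The curve `σ ↦ T̂(σ)(x,y)` is differentiable with derivative
`T̂′(σ)(x,y) = -T̂(σ)(𝓒(x,y)) + (X₁(σ)(-B₂x + A₂y), X₂(σ)(A₁x - B₁y))`. -/
theorem Tsymp_hasDerivAt (A₁ : X₁ →L[ℝ] X₁) (A₂ : X₂ →L[ℝ] X₂)
    (B₁ : X₂ →L[ℝ] X₁) (B₂ : X₁ →L[ℝ] X₂) :
    ∀ (x : X₁) (y : X₂), ∀ σ : ℝ, 0 ≤ σ →
      HasDerivAt (fun s : ℝ => Tsymp A₁ A₂ B₁ B₂ s (x, y))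
        (-(Tsymp A₁ A₂ B₁ B₂ σ (opCp A₁ A₂ B₁ B₂ (x, y))) +
          (Xop A₁ B₁ σ (-(B₂ x) + A₂ y), Xop A₂ B₂ σ (A₁ x - B₁ y))) σ := by
  intro x y σ _
  have h := HasDerivAt.prodMk ((expOp_hasDerivAt A₁ x σ).add (Xop_hasDerivAt A₁ B₁ y σ))
    ((Xop_hasDerivAt A₂ B₂ x σ).add (expOp_hasDerivAt A₂ y σ))
  convert h using 1
  swap
  simp only [Tsymp, opCp, ContinuousLinearMap.prod_apply, ContinuousLinearMap.coprod_apply,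
    ContinuousLinearMap.neg_apply, map_add, map_sub, map_neg, Prod.neg_mk, Prod.mk_add_mk,
    Prod.mk.injEq]
  constructor <;> abel
  rfl
end
end

section
/- For every real number x ≥ 0 and every natural number n, the operator norm of the n-th power of the 2×2 real matrix P(x) = [[1, x], [x, 1 + x²]], regarded as a linear map on the Euclidean space ℝ², satisfies ‖P(x)ⁿ‖ ≥ (1 + (x/2)(x + √(4 + x²)))ⁿ ≥ 1 + n·x. In particular, for β ∈ (0,1], t > 0 and x = (t/n)^{1−β}, the powers P(x)ⁿ satisfy ‖P(x)ⁿ‖ ≥ n^β t^{1−β}, so they are not uniformly bounded in n. -/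
noncomputable section

/-- The matrix `P(x) = [[1, x], [x, 1 + x²]]`. -/
def Pmat (x : ℝ) : Matrix (Fin 2) (Fin 2) ℝ := !![1, x; x, 1 + x ^ 2]

/-- `P(x)` as a continuous linear map on the Euclidean space `ℝ²`. -/
def PCLM (x : ℝ) : EuclideanSpace ℝ (Fin 2) →L[ℝ] EuclideanSpace ℝ (Fin 2) :=
  Matrix.toEuclideanCLM (𝕜 := ℝ) (Pmat x)

lemma key (x : ℝ) (hx : 0 ≤ x) (n : ℕ) :
    (1 + x / 2 * (x + Real.sqrt (4 + x ^ 2))) ^ n ≤ ‖(PCLM x) ^ n‖ := by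
  set s := Real.sqrt (4 + x ^ 2) with hs
  have hs2 : s ^ 2 = 4 + x ^ 2 := Real.sq_sqrt (by positivity)
  have hsnn : 0 ≤ s := Real.sqrt_nonneg _
  set lam : ℝ := 1 + x / 2 * (x + s) with hlam
  have hlamnn : 0 ≤ lam := by positivity
  set a : ℝ := (-x + s) / 2 with ha
  set v : EuclideanSpace ℝ (Fin 2) := (WithLp.equiv 2 _).symm ![a, 1] with hv
  have hvne : v ≠ 0 := by
    intro h
    have : (1 : ℝ) = 0 := by
      have := congrArg (fun w : EuclideanSpace ℝ (Fin 2) => w 1) h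
      simpa [hv] using this
    norm_num at this
  have heig : PCLM x v = lam • v := by
    rw [hv, PCLM]
    rw [WithLp.equiv_symm_apply, Matrix.toEuclideanCLM_toLp, ← Matrix.toLin'_apply]
    have : Matrix.toLin' (Pmat x) ![a, 1] = lam • ![a, 1] := by
      funext i
      fin_cases i <;>
        simp [Pmat, Matrix.toLin'_apply, Matrix.mulVec, dotProduct,
          Fin.sum_univ_two, ha, hlam] <;> nlinarith [hs2]
    rw [this]
    rfl
  have heign : ((PCLM x) ^ n) v = lam ^ n • v := by
    induction n with
    | zero => simp
    | succ k ih =>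
      rw [pow_succ', pow_succ']
      simp only [ContinuousLinearMap.mul_apply, ih, map_smul, heig, smul_smul]
      ring_nf
  have hnorm : lam ^ n * ‖v‖ = ‖((PCLM x) ^ n) v‖ := by
    rw [heign, norm_smul, Real.norm_eq_abs, abs_of_nonneg (pow_nonneg hlamnn n)]
  have hle := ContinuousLinearMap.le_opNorm ((PCLM x) ^ n) v
  rw [← hnorm] at hle
  have hvpos : 0 < ‖v‖ := norm_pos_iff.mpr hvne
  exact le_of_mul_le_mul_right (by linarith) hvpos

lemma key2 (x : ℝ) (hx : 0 ≤ x) (n : ℕ) :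
    1 + (n : ℝ) * x ≤ (1 + x / 2 * (x + Real.sqrt (4 + x ^ 2))) ^ n := by
  set s := Real.sqrt (4 + x ^ 2) with hs
  have h2s : 2 ≤ s := by
    rw [hs, show (2:ℝ) = Real.sqrt 4 by rw [show (4:ℝ) = 2^2 by norm_num]; exact (Real.sqrt_sq (by norm_num)).symm]
    exact Real.sqrt_le_sqrt (by nlinarith)
  have h1 : 1 + x ≤ 1 + x / 2 * (x + s) := by nlinarith
  calc 1 + (n : ℝ) * x ≤ (1 + x) ^ n := by
        have := one_add_mul_le_pow (a := x) (by linarith) n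
        linarith [this]
    _ ≤ (1 + x / 2 * (x + s)) ^ n := pow_le_pow_left₀ (by linarith) h1 n

/-- The powers of `P(x)` satisfy `‖P(x)ⁿ‖ ≥ (1 + (x/2)(x + √(4 + x²)))ⁿ ≥ 1 + n·x`; in
particular, for `β ∈ (0,1]`, `t > 0` and `x = (t/n)^(1-β)`, one has
`‖P(x)ⁿ‖ ≥ n^β · t^(1-β)`, so the powers are not uniformly bounded in `n`. -/
theorem Pmat_pow_norm_unbounded :
    (∀ x : ℝ, 0 ≤ x → ∀ n : ℕ,
      (1 + x / 2 * (x + Real.sqrt (4 + x ^ 2))) ^ n ≤ ‖(PCLM x) ^ n‖ ∧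
      1 + (n : ℝ) * x ≤ (1 + x / 2 * (x + Real.sqrt (4 + x ^ 2))) ^ n) ∧
    (∀ β : ℝ, β ∈ Set.Ioc (0 : ℝ) 1 → ∀ t : ℝ, 0 < t → ∀ n : ℕ, 1 ≤ n →
      (n : ℝ) ^ β * t ^ (1 - β) ≤ ‖(PCLM ((t / n) ^ (1 - β))) ^ n‖) := by
  constructor
  · exact fun x hx n => ⟨key x hx n, key2 x hx n⟩
  · intro β hβ t ht n hn
    have hn0 : (0 : ℝ) < n := by exact_mod_cast hn
    set x : ℝ := (t / n) ^ (1 - β) with hxdef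
    have hx : 0 ≤ x := Real.rpow_nonneg (by positivity) _
    have h1 : (n : ℝ) * x = (n : ℝ) ^ β * t ^ (1 - β) := by
      rw [hxdef, Real.div_rpow ht.le hn0.le]
      have hns : (n : ℝ) = (n : ℝ) ^ β * (n : ℝ) ^ (1 - β) := by
        rw [← Real.rpow_add hn0]; norm_num
      have hnp : (0:ℝ) < (n : ℝ) ^ (1 - β) := Real.rpow_pos_of_pos hn0 _
      rw [show (n:ℝ) * (t ^ (1 - β) / (n:ℝ) ^ (1 - β)) =
          ((n:ℝ) ^ β * (n:ℝ) ^ (1 - β)) * (t ^ (1 - β) / (n:ℝ) ^ (1 - β)) by rw [← hns]]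
      field_simp
    have h2 := (key2 x hx n).trans (key x hx n)
    rw [h1] at h2
    linarith
end
end
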